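/- Multi-coset affine arithmetic-splitting criterion: with A = ⋃_{h∈H} ({h} × J_h) in G = Z × (R/Z), where H ⊆ qZ is finite, and translation sets T_r = {(qk+r, β_r + k α_r) : k ∈ Z} for 0 ≤ r ≤ q−1, the translates A + t for t ∈ ⋃_r T_r tile G (a.e. disjoint cover) if and only if for every r, the sets J_h − (h/q)α_r over h ∈ H partition the circle R/Z up to null sets. -/

import Mathlib

open MeasureTheory Set

local notation "X" => AddCircle (1 : ℝ)

noncomputable def fib (n : ℤ) (S : Set (ℤ × X)) : Set X := {x | (n, x) ∈ S}

lemma count_prod_null (S : Set (ℤ × X)) :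
    Measure.count.prod volume S = 0 ↔ ∀ n : ℤ, volume (fib n S) = 0 := by
  constructor
  · intro h n
    have := Measure.measure_ae_null_of_prod_null h
    have h2 : {m : ℤ | ¬ volume (Prod.mk m ⁻¹' S) = 0} = ∅ := by
      rw [← Measure.count_eq_zero_iff]
      rw [Filter.EventuallyEq, ae_iff] at this
      simpa using this
    by_contra hn
    exact absurd (Set.eq_empty_iff_forall_notMem.1 h2 n) (by simpa [fib, Set.preimage] using hn)
  · intro h
    have hsub : S ⊆ ⋃ n : ℤ, {n} ×ˢ toMeasurable volume (fib n S) := by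
      rintro ⟨n, x⟩ hx
      have : x ∈ fib n S := hx
      exact Set.mem_iUnion.2 ⟨n, by simpa using subset_toMeasurable _ _ this⟩
    refine le_antisymm ?_ (zero_le)
    calc Measure.count.prod volume S ≤ _ := measure_mono hsub
    _ ≤ ∑' n : ℤ, Measure.count.prod volume ({n} ×ˢ toMeasurable volume (fib n S)) :=
        measure_iUnion_le _
    _ = 0 := by
        have : ∀ n : ℤ, Measure.count.prod volume ({n} ×ˢ toMeasurable volume (fib n S)) = 0 := by
          intro n
          rw [Measure.prod_prod, measure_toMeasurable, h n, mul_zero]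
        simp only [this, tsum_zero]

lemma img_vol (γ : X) (S : Set X) : volume ((fun x => x + γ) '' S) = volume S := by
  have : (fun x : X => x + γ) '' S = (fun x => (-γ) + x) ⁻¹' S := by
    ext x
    constructor
    · rintro ⟨y, hy, rfl⟩; simpa [add_comm, add_assoc] using hy
    · intro h; exact ⟨-γ + x, h, neg_add_cancel_comm γ x⟩

  rw [this, measure_preimage_add]

lemma img_inj (γ : X) : Function.Injective (fun x : X => x + γ) :=
  fun a b h => by simpa using h

lemma img_aedisj (γ : X) (S S' : Set X) (h : AEDisjoint volume S S') :
    AEDisjoint volume ((fun x => x + γ) '' S) ((fun x => x + γ) '' S') := by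
  unfold AEDisjoint at *
  rw [← Set.image_inter (img_inj γ), img_vol]
  exact h

lemma img_compl (γ : X) (S : Set X) :
    volume (Set.univ \ (fun x => x + γ) '' S) = volume (Set.univ \ S) := by
  have : Set.univ \ (fun x : X => x + γ) '' S = (fun x => x + γ) '' (Set.univ \ S) := by
    rw [Set.image_diff (img_inj γ), Set.image_univ,
      Set.range_eq_univ.2 (fun y => ⟨y - γ, by simp⟩)]
  rw [this, img_vol]


section Arith
variable {q : ℕ} (hq : 1 ≤ q)
include hq

lemma qpos : (0:ℤ) < (q:ℤ) := by exact_mod_cast hq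

/-- residue of `n` mod `q` as an element of `Fin q` -/
def rOf (hq : 1 ≤ q) (n : ℤ) : Fin q :=
  ⟨(n % (q:ℤ)).toNat, by
    have h1 : 0 ≤ n % (q:ℤ) := Int.emod_nonneg n (qpos hq).ne'
    have h2 : n % (q:ℤ) < q := Int.emod_lt_of_pos n (qpos hq)
    omega⟩

lemma rOf_coe (n : ℤ) : ((rOf hq n : Fin q) : ℤ) = n % (q:ℤ) := by
  have h1 : 0 ≤ n % (q:ℤ) := Int.emod_nonneg n (qpos hq).ne'
  simp [rOf, Int.toNat_of_nonneg h1]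

lemma coe_lt (r : Fin q) : (0:ℤ) ≤ (r:ℤ) ∧ (r:ℤ) < (q:ℤ) := by
  constructor
  · exact_mod_cast Nat.zero_le _
  · exact_mod_cast r.isLt

lemma rOf_self (r : Fin q) : rOf hq (r:ℤ) = r := by
  obtain ⟨h1, h2⟩ := coe_lt hq r
  apply Fin.ext
  have : ((rOf hq (r:ℤ) : Fin q) : ℤ) = ((r : Fin q) : ℤ) := by
    rw [rOf_coe, Int.emod_eq_of_lt h1 h2]
  exact_mod_cast this

lemma coe_ediv (r : Fin q) : (r:ℤ) / (q:ℤ) = 0 := by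
  obtain ⟨h1, h2⟩ := coe_lt hq r
  exact Int.ediv_eq_zero_of_lt h1 h2

/-- the key arithmetic fact -/
lemma k_eq {h n : ℤ} (hh : (q:ℤ) ∣ h) {r' : Fin q} {k : ℤ}
    (hn : h + ((q:ℤ)*k + (r':ℤ)) = n) :
    k = n / (q:ℤ) - h / (q:ℤ) ∧ (r' : ℤ) = n % (q:ℤ) ∧ r' = rOf hq n := by
  obtain ⟨c, rfl⟩ := hh
  obtain ⟨hr0, hrq⟩ := coe_lt hq r'
  have hqz : (q:ℤ) ≠ 0 := (qpos hq).ne'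
  have hn' : n = (r':ℤ) + (q:ℤ) * (c + k) := by linarith [hn]
  have hdiv : n / (q:ℤ) = c + k := by
    rw [hn', Int.add_mul_ediv_left _ _ hqz, Int.ediv_eq_zero_of_lt hr0 hrq, zero_add]
  have hmod : n % (q:ℤ) = (r':ℤ) := by
    rw [hn', Int.add_mul_emod_self_left, Int.emod_eq_of_lt hr0 hrq]
  have hc : ((q:ℤ)*c) / (q:ℤ) = c := Int.mul_ediv_cancel_left c hqz
  refine ⟨by rw [hdiv, hc]; ring, hmod.symm, ?_⟩
  apply Fin.ext
  have : ((rOf hq n : Fin q) : ℤ) = (r' : ℤ) := by rw [rOf_coe, hmod]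
  exact_mod_cast this.symm
end Arith

section Fib
variable {q : ℕ} (hq : 1 ≤ q) (H : Finset ℤ) (J : ℤ → Set X) (β α : Fin q → X)

def Aset : Set (ℤ × X) := ⋃ h ∈ H, {(h : ℤ)} ×ˢ J h

def Tset : Set (ℤ × X) :=
  {t | ∃ (r : Fin q) (k : ℤ), t = ((q : ℤ) * k + (r : ℤ), β r + k • α r)}

lemma mem_Aset (p : ℤ × X) : p ∈ Aset H J ↔ ∃ h ∈ H, p.1 = h ∧ p.2 ∈ J h := by
  obtain ⟨a, b⟩ := p
  simp only [Aset, Set.mem_iUnion, Set.mem_prod, Set.mem_singleton_iff]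
  aesop

/-- target sets on the circle -/
def Dset (r : Fin q) (h : ℤ) : Set X := (· - (h / (q : ℤ)) • α r) '' J h

lemma img_shift (r : Fin q) (h m : ℤ) :
    (fun x => x + (β r + (m - h / (q:ℤ)) • α r)) '' (J h)
      = (fun x => x + (β r + m • α r)) '' (Dset J α r h) := by
  have hfun : (fun x : X => x + (β r + (m - h / (q:ℤ)) • α r))
      = ((fun x => x + (β r + m • α r)) ∘ (fun x => x - (h / (q:ℤ)) • α r)) := by
    funext x
    show x + (β r + (m - h / (q:ℤ)) • α r) = x - (h / (q:ℤ)) • α r + (β r + m • α r)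
    rw [sub_zsmul]
    abel
  rw [Dset, hfun, Set.image_comp]

lemma fib_image (n : ℤ) (t : ℤ × X) (S : Set (ℤ × X)) :
    fib n ((fun p => p + t) '' S) = (fun x => x + t.2) '' fib (n - t.1) S := by
  ext x
  constructor
  · rintro ⟨⟨a, b⟩, hS, heq⟩
    have h1 : a + t.1 = n := congrArg Prod.fst heq
    have h2 : b + t.2 = x := congrArg Prod.snd heq
    exact ⟨b, by simpa [fib, ← h1] using hS, h2⟩
  · rintro ⟨y, hy, rfl⟩
    exact ⟨(n - t.1, y), hy, by simp [Prod.ext_iff]⟩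

lemma fib_Aset_mem {n : ℤ} (hn : n ∈ H) : fib n (Aset H J) = J n := by
  ext x
  simp only [fib, Set.mem_setOf_eq, mem_Aset]
  constructor
  · rintro ⟨h, hh, h1, h2⟩; rwa [show h = n from h1.symm] at h2
  · intro hx; exact ⟨n, hn, rfl, hx⟩

lemma fib_Aset_not {n : ℤ} (hn : n ∉ H) : fib n (Aset H J) = ∅ := by
  ext x
  simp only [fib, Set.mem_setOf_eq, mem_Aset, Set.mem_empty_iff_false, iff_false]
  rintro ⟨h, hh, h1, -⟩
  exact hn (h1 ▸ hh)

/-- fiber of a single translate when the relevant index is in `H` -/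
lemma fib_single_mem (hH : ∀ h ∈ H, (q:ℤ) ∣ h) {n : ℤ} (r' : Fin q) (k : ℤ)
    (hmem : n - ((q:ℤ)*k + (r':ℤ)) ∈ H) :
    fib n ((fun p => p + (((q:ℤ)*k + (r':ℤ), β r' + k • α r') : ℤ × X)) '' (Aset H J))
      = (fun x => x + (β (rOf hq n) + (n / (q:ℤ)) • α (rOf hq n))) ''
          (Dset J α (rOf hq n) (n - ((q:ℤ)*k + (r':ℤ)))) := by
  set h := n - ((q:ℤ)*k + (r':ℤ)) with hh
  have hdvd : (q:ℤ) ∣ h := hH h hmem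
  have hsum : h + ((q:ℤ)*k + (r':ℤ)) = n := by rw [hh]; ring
  obtain ⟨hk, -, hr⟩ := k_eq hq hdvd hsum
  rw [fib_image, ← hh, fib_Aset_mem H J hmem, ← hr, ← img_shift, hk]

lemma fib_single_not {n : ℤ} (r' : Fin q) (k : ℤ)
    (hmem : n - ((q:ℤ)*k + (r':ℤ)) ∉ H) :
    fib n ((fun p => p + (((q:ℤ)*k + (r':ℤ), β r' + k • α r') : ℤ × X)) '' (Aset H J))
      = ∅ := by
  rw [fib_image, fib_Aset_not H J hmem, Set.image_empty]

/-- fiber of the full union -/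
lemma fib_union (hH : ∀ h ∈ H, (q:ℤ) ∣ h) (n : ℤ) :
    fib n (⋃ t ∈ Tset (q := q) β α, (fun p => p + t) '' (Aset H J))
      = (fun x => x + (β (rOf hq n) + (n / (q:ℤ)) • α (rOf hq n))) ''
          (⋃ h ∈ H, Dset J α (rOf hq n) h) := by
  have hqz : (q:ℤ) ≠ 0 := (qpos hq).ne'
  ext x
  simp only [fib, Set.mem_setOf_eq, Set.mem_iUnion]
  constructor
  · rintro ⟨t, ⟨r', k, rfl⟩, hx⟩
    have hx' : x ∈ fib n ((fun p => p + (((q:ℤ)*k + (r':ℤ), β r' + k • α r') : ℤ × X))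
        '' (Aset H J)) := hx
    by_cases hmem : n - ((q:ℤ)*k + (r':ℤ)) ∈ H
    · rw [fib_single_mem hq H J β α hH r' k hmem] at hx'
      obtain ⟨y, hy, rfl⟩ := hx'
      exact ⟨y, Set.mem_iUnion.2 ⟨_, Set.mem_iUnion.2 ⟨hmem, hy⟩⟩, rfl⟩
    · rw [fib_single_not H J β α r' k hmem] at hx'
      exact absurd hx' (Set.notMem_empty x)
  · rintro ⟨y, hy, rfl⟩
    simp only [Set.mem_iUnion] at hy
    obtain ⟨h, hmem, hy⟩ := hy
    have hdvd : (q:ℤ) ∣ h := hH h hmem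
    set r : Fin q := rOf hq n with hrdef
    refine ⟨((q:ℤ)*(n / (q:ℤ) - h / (q:ℤ)) + (r:ℤ),
        β r + (n / (q:ℤ) - h / (q:ℤ)) • α r), ⟨r, _, rfl⟩, ?_⟩
    have hfst : n - ((q:ℤ)*(n / (q:ℤ) - h / (q:ℤ)) + (r:ℤ)) = h := by
      have h1 : (q:ℤ) * (h / (q:ℤ)) = h := Int.mul_ediv_cancel' hdvd
      have h2 : (q:ℤ) * (n / (q:ℤ)) + (r:ℤ) = n := by
        rw [hrdef, rOf_coe hq n]
        exact Int.mul_ediv_add_emod n (q:ℤ)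
      linarith [h1, h2]
    have hmem' : n - ((q:ℤ)*(n / (q:ℤ) - h / (q:ℤ)) + (r:ℤ)) ∈ H := by rw [hfst]; exact hmem
    have : ((fun x => x + (β r + (n / (q:ℤ)) • α r)) y) ∈ fib n ((fun p =>
        p + (((q:ℤ)*(n / (q:ℤ) - h / (q:ℤ)) + (r:ℤ),
          β r + (n / (q:ℤ) - h / (q:ℤ)) • α r) : ℤ × X)) '' (Aset H J)) := by
      rw [fib_single_mem hq H J β α hH r _ hmem', ← hrdef, hfst]
      exact ⟨y, hy, rfl⟩
    exact this

end Fib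


lemma aedisj_iff (γ : X) (S S' : Set X) :
    AEDisjoint volume ((fun x => x + γ) '' S) ((fun x => x + γ) '' S')
      ↔ AEDisjoint volume S S' := by
  unfold AEDisjoint
  rw [← Set.image_inter (img_inj γ), img_vol]

section MainSec
variable {q : ℕ} (hq : 1 ≤ q) (H : Finset ℤ) (hH : ∀ h ∈ H, (q:ℤ) ∣ h)
  (J : ℤ → Set X) (β α : Fin q → X)

omit hq hH in
lemma fib_inter (n : ℤ) (P Q : Set (ℤ × X)) : fib n (P ∩ Q) = fib n P ∩ fib n Q := rfl

omit hq hH in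
lemma fib_diff_univ (n : ℤ) (U : Set (ℤ × X)) :
    fib n (Set.univ \ U) = Set.univ \ fib n U := rfl

include hq hH in
lemma fib_at_r (r : Fin q) {h : ℤ} (hm : h ∈ H) :
    fib (r:ℤ) ((fun p => p + (((q:ℤ)*(-(h / (q:ℤ))) + (r:ℤ),
        β r + (-(h / (q:ℤ))) • α r) : ℤ × X)) '' Aset H J)
      = (fun x => x + (β r + ((r:ℤ) / (q:ℤ)) • α r)) '' Dset J α r h := by
  have h1 : (q:ℤ) * (h / (q:ℤ)) = h := Int.mul_ediv_cancel' (hH h hm)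
  have hval : (r:ℤ) - ((q:ℤ)*(-(h / (q:ℤ))) + (r:ℤ)) = h := by linarith
  have hmem : (r:ℤ) - ((q:ℤ)*(-(h / (q:ℤ))) + (r:ℤ)) ∈ H := by rw [hval]; exact hm
  rw [fib_single_mem hq H J β α hH r _ hmem, rOf_self hq r, hval]

include hq hH in
theorem main (hJ : ∀ h, MeasurableSet (J h)) :
    ((∀ t₁ ∈ Tset (q := q) β α, ∀ t₂ ∈ Tset (q := q) β α, t₁ ≠ t₂ →
        AEDisjoint (Measure.count.prod volume)
          ((fun p => p + t₁) '' Aset H J) ((fun p => p + t₂) '' Aset H J)) ∧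
      (Measure.count.prod volume)
        (Set.univ \ ⋃ t ∈ Tset (q := q) β α, (fun p => p + t) '' Aset H J) = 0) ↔
    (∀ r : Fin q,
      (∀ h₁ ∈ H, ∀ h₂ ∈ H, h₁ ≠ h₂ →
        AEDisjoint volume (Dset J α r h₁) (Dset J α r h₂)) ∧
      volume (Set.univ \ ⋃ h ∈ H, Dset J α r h) = 0) := by
  have hqz : (q:ℤ) ≠ 0 := (qpos hq).ne'
  constructor
  · rintro ⟨hdisj, hcover⟩ r
    constructor
    · intro h₁ hm₁ h₂ hm₂ hne
      have ht₁ : (((q:ℤ)*(-(h₁ / (q:ℤ))) + (r:ℤ), β r + (-(h₁ / (q:ℤ))) • α r) : ℤ × X)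
          ∈ Tset (q := q) β α := ⟨r, -(h₁ / (q:ℤ)), rfl⟩
      have ht₂ : (((q:ℤ)*(-(h₂ / (q:ℤ))) + (r:ℤ), β r + (-(h₂ / (q:ℤ))) • α r) : ℤ × X)
          ∈ Tset (q := q) β α := ⟨r, -(h₂ / (q:ℤ)), rfl⟩
      have hne' : (((q:ℤ)*(-(h₁ / (q:ℤ))) + (r:ℤ), β r + (-(h₁ / (q:ℤ))) • α r) : ℤ × X)
          ≠ (((q:ℤ)*(-(h₂ / (q:ℤ))) + (r:ℤ), β r + (-(h₂ / (q:ℤ))) • α r) : ℤ × X) := by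
        intro heq
        apply hne
        have hfst := congrArg Prod.fst heq
        simp only at hfst
        have hk : (h₁ / (q:ℤ)) = (h₂ / (q:ℤ)) := by
          have := add_right_cancel hfst
          have := mul_left_cancel₀ hqz this
          linarith
        calc h₁ = (q:ℤ) * (h₁ / (q:ℤ)) := (Int.mul_ediv_cancel' (hH h₁ hm₁)).symm
          _ = (q:ℤ) * (h₂ / (q:ℤ)) := by rw [hk]
          _ = h₂ := Int.mul_ediv_cancel' (hH h₂ hm₂)
      have hd := hdisj _ ht₁ _ ht₂ hne'
      have h0 := (count_prod_null _).1 hd (r:ℤ)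
      rw [fib_inter, fib_at_r hq H hH J β α r hm₁, fib_at_r hq H hH J β α r hm₂] at h0
      exact (aedisj_iff _ _ _).1 h0
    · have h0 := (count_prod_null _).1 hcover (r:ℤ)
      rw [fib_diff_univ, fib_union hq H J β α hH (r:ℤ), rOf_self hq r, img_compl] at h0
      exact h0
  · intro hyp
    constructor
    · rintro t₁ ⟨r₁, k₁, rfl⟩ t₂ ⟨r₂, k₂, rfl⟩ hne
      refine (count_prod_null _).2 (fun n => ?_)
      by_cases hm₁ : n - ((q:ℤ)*k₁ + (r₁:ℤ)) ∈ H
      · by_cases hm₂ : n - ((q:ℤ)*k₂ + (r₂:ℤ)) ∈ H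
        · -- both fibers nonempty
          have hs₁ : (n - ((q:ℤ)*k₁ + (r₁:ℤ))) + ((q:ℤ)*k₁ + (r₁:ℤ)) = n := by ring
          have hs₂ : (n - ((q:ℤ)*k₂ + (r₂:ℤ))) + ((q:ℤ)*k₂ + (r₂:ℤ)) = n := by ring
          obtain ⟨hk₁, -, hr₁⟩ := k_eq hq (hH _ hm₁) hs₁
          obtain ⟨hk₂, -, hr₂⟩ := k_eq hq (hH _ hm₂) hs₂
          have hhne : n - ((q:ℤ)*k₁ + (r₁:ℤ)) ≠ n - ((q:ℤ)*k₂ + (r₂:ℤ)) := by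
            intro heq
            apply hne
            have hkk : k₁ = k₂ := by
              rw [hk₁, hk₂, heq]
            rw [hkk, hr₁, hr₂]
          have hd := (hyp (rOf hq n)).1 _ hm₁ _ hm₂ hhne
          rw [fib_inter, fib_single_mem hq H J β α hH r₁ k₁ hm₁,
            fib_single_mem hq H J β α hH r₂ k₂ hm₂]
          exact (aedisj_iff _ _ _).2 hd
        · rw [fib_inter, fib_single_not H J β α r₂ k₂ hm₂, Set.inter_empty, measure_empty]
      · rw [fib_inter, fib_single_not H J β α r₁ k₁ hm₁, Set.empty_inter, measure_empty]
    · refine (count_prod_null _).2 (fun n => ?_)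
      rw [fib_diff_univ, fib_union hq H J β α hH n, img_compl]
      exact (hyp (rOf hq n)).2

end MainSec

/-- Multi-coset affine arithmetic-splitting criterion. Work in
`G = ℤ × ℝ/ℤ` with counting measure times Lebesgue (Haar) measure. Let
`H ⊆ qℤ` be finite, `J h ⊆ ℝ/ℤ` measurable, `A = ⋃_{h∈H} {h} × J h`, and for
`0 ≤ r < q` let `T_r = {(qk+r, β_r + k·α_r) : k ∈ ℤ}`. Then the translates
`A + t`, `t ∈ ⋃_r T_r`, tile `G` (pairwise a.e.-disjoint, union conull) iff
for every `r` the sets `J h − (h/q)·α_r`, `h ∈ H`, partition the circle up to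
null sets. -/
theorem stmt18 (q : ℕ) (hq : 1 ≤ q) (H : Finset ℤ) (hH : ∀ h ∈ H, (q : ℤ) ∣ h)
    (J : ℤ → Set (AddCircle (1 : ℝ))) (hJ : ∀ h, MeasurableSet (J h))
    (β α : Fin q → AddCircle (1 : ℝ)) :
    (let μ : Measure (ℤ × AddCircle (1 : ℝ)) := Measure.count.prod volume
     let A : Set (ℤ × AddCircle (1 : ℝ)) := ⋃ h ∈ H, {(h : ℤ)} ×ˢ J h
     let T : Set (ℤ × AddCircle (1 : ℝ)) :=
       {t | ∃ (r : Fin q) (k : ℤ), t = ((q : ℤ) * k + (r : ℤ), β r + k • α r)}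
     (∀ t₁ ∈ T, ∀ t₂ ∈ T, t₁ ≠ t₂ →
        MeasureTheory.AEDisjoint μ ((· + t₁) '' A) ((· + t₂) '' A)) ∧
       μ (Set.univ \ ⋃ t ∈ T, (· + t) '' A) = 0) ↔
    (∀ r : Fin q,
      (∀ h₁ ∈ H, ∀ h₂ ∈ H, h₁ ≠ h₂ →
        MeasureTheory.AEDisjoint volume
          ((· - (h₁ / (q : ℤ)) • α r) '' J h₁)
          ((· - (h₂ / (q : ℤ)) • α r) '' J h₂)) ∧
      volume (Set.univ \ ⋃ h ∈ H, (· - (h / (q : ℤ)) • α r) '' J h) = 0) := by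
  exact main hq H hH J β α hJ
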